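/- For a mechanical Lagrangian with positive definite mass matrix M and nonzero constraint covector μ(q), the quantity ‖μ(q)‖²_M := ⟨μ(q), M⁻¹μ(q)⟩ is strictly positive, so the nonholonomic Newmark method F_h^{0,0,0} is explicit: given (q_k, v_k) with ⟨μ(q_k), v_k⟩ = 0, the values λ_k, q_{k+1}, λ′_{k+1}, v_{k+1} are each determined by closed-form expressions, namely λ_k = ⟨μ(q_k), M⁻¹∇V(q_k)⟩/‖μ(q_k)‖²_M, q_{k+1} = q_k + h v_k + (h²/2)(−M⁻¹∇V(q_k) + λ_k M⁻¹μ(q_k)), λ′_{k+1} = −(2/(h‖μ(q_{k+1})‖²_M))⟨μ(q_{k+1}), (q_{k+1}−q_k)/h⟩ + ⟨μ(q_{k+1}), M⁻¹∇V(q_{k+1})⟩/‖μ(q_{k+1})‖²_M, and v_{k+1} = (q_{k+1} − q_k)/h + (h/2)(−M⁻¹∇V(q_{k+1}) + λ′_{k+1} M⁻¹μ(q_{k+1})); moreover this v_{k+1} satisfies the constraint ⟨μ(q_{k+1}), v_{k+1}⟩ = 0. -/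

import Mathlib

open Matrix

lemma posdef_dot (n : ℕ) (M : Matrix (Fin n) (Fin n) ℝ) (hM : M.PosDef)
    (x : Fin n → ℝ) (hx : x ≠ 0) : 0 < x ⬝ᵥ (M⁻¹ *ᵥ x) := by
  have := hM.inv.dotProduct_mulVec_pos hx
  simpa using this

/-- The nonholonomic Newmark method F_h^{0,0,0} is explicit for mechanical Lagrangians:
‖μ(q)‖²_M = ⟨μ(q), M⁻¹μ(q)⟩ is strictly positive, and the closed-form expressions for
λ_k, q_{k+1}, λ′_{k+1}, v_{k+1} satisfy the equations of the method, in particular the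
final velocity satisfies the constraint ⟨μ(q_{k+1}), v_{k+1}⟩ = 0. -/
theorem nonholonomic_newmark_explicit
    (n : ℕ) (M : Matrix (Fin n) (Fin n) ℝ) (hM : M.PosDef)
    (V : (Fin n → ℝ) → ℝ) (gradV : (Fin n → ℝ) → (Fin n → ℝ))
    (hV : Differentiable ℝ V)
    (hgrad : ∀ q w, fderiv ℝ V q w = gradV q ⬝ᵥ w)
    (μ : (Fin n → ℝ) → (Fin n → ℝ)) (hμ : ∀ q, μ q ≠ 0)
    (h : ℝ) (hh : 0 < h)
    (qk vk : Fin n → ℝ) (hvk : μ qk ⬝ᵥ vk = 0)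
    (lamk lamk1' : ℝ) (qk1 vk1 : Fin n → ℝ)
    (hlamk : lamk = (μ qk ⬝ᵥ (M⁻¹ *ᵥ gradV qk)) / (μ qk ⬝ᵥ (M⁻¹ *ᵥ μ qk)))
    (hqk1 : qk1 = qk + h • vk + (h^2/2) • (-(M⁻¹ *ᵥ gradV qk) + lamk • (M⁻¹ *ᵥ μ qk)))
    (hlamk1' : lamk1' = -(2/(h * (μ qk1 ⬝ᵥ (M⁻¹ *ᵥ μ qk1)))) *
        (μ qk1 ⬝ᵥ ((1/h) • (qk1 - qk)))
      + (μ qk1 ⬝ᵥ (M⁻¹ *ᵥ gradV qk1)) / (μ qk1 ⬝ᵥ (M⁻¹ *ᵥ μ qk1)))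
    (hvk1 : vk1 = (1/h) • (qk1 - qk)
      + (h/2) • (-(M⁻¹ *ᵥ gradV qk1) + lamk1' • (M⁻¹ *ᵥ μ qk1))) :
    (∀ q, 0 < μ q ⬝ᵥ (M⁻¹ *ᵥ μ q)) ∧
    qk = qk1 - h • vk1 + (h^2/2) • (-(M⁻¹ *ᵥ gradV qk1) + lamk1' • (M⁻¹ *ᵥ μ qk1)) ∧
    μ qk ⬝ᵥ ((1/h) • (qk1 - qk)) = 0 ∧
    μ qk1 ⬝ᵥ vk1 = 0 := by
  have hpos : ∀ q, 0 < μ q ⬝ᵥ (M⁻¹ *ᵥ μ q) := fun q => posdef_dot n M hM (μ q) (hμ q)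
  have hne : ∀ q, μ q ⬝ᵥ (M⁻¹ *ᵥ μ q) ≠ 0 := fun q => (hpos q).ne'
  have hh' : h ≠ 0 := hh.ne'
  refine ⟨hpos, ?_, ?_, ?_⟩
  · rw [hvk1]
    match_scalars <;> field_simp <;> ring
  · have hd : qk1 - qk = h • vk + (h^2/2) • (-(M⁻¹ *ᵥ gradV qk) + lamk • (M⁻¹ *ᵥ μ qk)) := by
      rw [hqk1]; abel
    have hp := hne qk
    rw [hd]
    simp only [dotProduct_add, dotProduct_smul, dotProduct_neg, hvk, hlamk, smul_eq_mul]
    set a := μ qk ⬝ᵥ (M⁻¹ *ᵥ gradV qk)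
    set p := μ qk ⬝ᵥ (M⁻¹ *ᵥ μ qk)
    field_simp
    ring
  · rw [hvk1]
    simp only [dotProduct_add, dotProduct_smul, dotProduct_neg, hlamk1', smul_eq_mul]
    have hp := hne qk1
    set c := μ qk1 ⬝ᵥ ((1/h) • (qk1 - qk)) with hc
    set g := μ qk1 ⬝ᵥ (M⁻¹ *ᵥ gradV qk1)
    set p := μ qk1 ⬝ᵥ (M⁻¹ *ᵥ μ qk1)
    field_simp
    ring
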